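/- Let S be a two-qubit state (4×4 positive semidefinite matrix with trace 1). Define the real Bloch vectors n, s ∈ ℝ³ by n_k = tr(S·(σ_k⊗I₂)) and s_ℓ = tr(S·(I₂⊗σ_ℓ)), and the real 3×3 matrix C by C_{kℓ} = tr(S·(σ_k⊗σ_ℓ)) − n_k·s_ℓ. Assume ‖n‖² < 1 and ‖s‖² < 1 (Euclidean norms). Then for every pair of dichotomic observables A and B, |Cor_S(A, B)| ≤ ‖C‖₂ / (√(1 − ‖n‖²)·√(1 − ‖s‖²)), where ‖C‖₂ denotes the spectral norm (largest singular value, equivalently the ℓ²→ℓ² operator norm) of C. -/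

import Mathlib

open Matrix Complex
open scoped Kronecker ComplexConjugate ComplexOrder

noncomputable section

abbrev M2 : Type := Matrix (Fin 2) (Fin 2) ℂ
abbrev M4 : Type := Matrix (Fin 2 × Fin 2) (Fin 2 × Fin 2) ℂ

/-- Pauli matrix σ₁. -/
def σ1 : M2 := !![0, 1; 1, 0]
/-- Pauli matrix σ₂. -/
def σ2 : M2 := !![0, -Complex.I; Complex.I, 0]
/-- Pauli matrix σ₃. -/
def σ3 : M2 := !![1, 0; 0, -1]

/-- The Pauli triple (σ₁, σ₂, σ₃). -/
def pauli : Fin 3 → M2 := ![σ1, σ2, σ3]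

/-- A dichotomic observable: Hermitian, squares to the identity, traceless. -/
def Dichotomic (A : M2) : Prop := A.IsHermitian ∧ A * A = 1 ∧ A.trace = 0

/-- A complementary triple of dichotomic observables. -/
def ComplementaryTriple (X : Fin 3 → M2) : Prop :=
  (∀ i, Dichotomic (X i)) ∧ ∀ i j, i ≠ j → (X i * X j).trace = 0

/-- Expectation value E_S(A ⊗ B) = tr(S·(A⊗B)) (its real part; it is real for states and
Hermitian observables). -/
def EE (S : M4) (A B : M2) : ℝ := (Matrix.trace (S * (A ⊗ₖ B))).re

/-- Covariance of A and B in the state S. -/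
def Cov (S : M4) (A B : M2) : ℝ := EE S A B - EE S A 1 * EE S 1 B

/-- Variance of a dichotomic observable A measured on the first subsystem. -/
def Var1 (S : M4) (A : M2) : ℝ := 1 - (EE S A 1) ^ 2
/-- Variance of a dichotomic observable B measured on the second subsystem. -/
def Var2 (S : M4) (B : M2) : ℝ := 1 - (EE S 1 B) ^ 2

/-- The Pearson correlation coefficient of observables A and B in the state S. -/
def Cor (S : M4) (A B : M2) : ℝ := Cov S A B / Real.sqrt (Var1 S A * Var2 S B)


/-! ### Auxiliary lemmas -/

lemma EE_add_left' (S : M4) (A A' B : M2) : EE S (A + A') B = EE S A B + EE S A' B := by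
  simp [EE, Matrix.add_kronecker, Matrix.mul_add]

lemma EE_smul_left' (S : M4) (r : ℝ) (A B : M2) : EE S ((r:ℂ) • A) B = r * EE S A B := by
  simp [EE, Matrix.smul_kronecker, Matrix.mul_smul, Complex.real_smul]

lemma EE_add_right' (S : M4) (A B B' : M2) : EE S A (B + B') = EE S A B + EE S A B' := by
  simp [EE, Matrix.kronecker_add, Matrix.mul_add]

lemma EE_smul_right' (S : M4) (r : ℝ) (A B : M2) : EE S A ((r:ℂ) • B) = r * EE S A B := by
  simp [EE, Matrix.kronecker_smul, Matrix.mul_smul, Complex.real_smul]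

lemma dichotomic_bloch' (A : M2) (hA : Dichotomic A) :
    ∃ a : Fin 3 → ℝ, (∑ k, a k ^ 2 = 1) ∧
      A = (a 0 : ℂ) • pauli 0 + (a 1 : ℂ) • pauli 1 + (a 2 : ℂ) • pauli 2 := by
  obtain ⟨hH, hsq, htr⟩ := hA
  have h00 : (A 0 0).im = 0 := by
    have := hH.apply 0 0
    simpa [Complex.conj_eq_iff_im] using this
  have h11 : A 1 1 = -A 0 0 := by
    have : A 0 0 + A 1 1 = 0 := by simpa [Matrix.trace, Fin.sum_univ_two] using htr
    linear_combination this
  have h10 : A 1 0 = conj (A 0 1) := (hH.apply 1 0).symm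
  set z := A 0 1 with hz
  refine ⟨![z.re, -z.im, (A 0 0).re], ?_, ?_⟩
  · have hsq00 : A 0 0 * A 0 0 + A 0 1 * A 1 0 = 1 := by
      have := congrFun (congrFun hsq 0) 0
      simpa [Matrix.mul_apply, Fin.sum_univ_two, Matrix.one_apply] using this
    have := congrArg Complex.re hsq00
    simp [h10, Complex.mul_re, Complex.mul_im, h00] at this
    simp [Fin.sum_univ_three]
    nlinarith [this]
  · ext i j
    fin_cases i <;> fin_cases j <;>
      simp [pauli, σ1, σ2, σ3, h11, h10, hz] <;>
      apply Complex.ext <;>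
      simp [Complex.mul_re, Complex.mul_im, h00]

open scoped Matrix.Norms.L2Operator
open scoped RealInnerProductSpace

/-- spectral-norm bound for the PCC. With Bloch vectors n, s and correlation
matrix C_{kℓ} = tr(S(σ_k⊗σ_ℓ)) − n_k s_ℓ, if ‖n‖² < 1 and ‖s‖² < 1 then for all dichotomic
A, B: `|Cor_S(A,B)| ≤ ‖C‖₂ / (√(1−‖n‖²)·√(1−‖s‖²))`, where ‖C‖₂ is the ℓ²→ℓ² operator
(spectral) norm. -/
theorem pcc_spectral_norm_bound (S : M4) (hpsd : S.PosSemidef) (htr : S.trace = 1)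
    (n s : Fin 3 → ℝ) (C : Matrix (Fin 3) (Fin 3) ℝ)
    (hn : ∀ k, n k = EE S (pauli k) 1)
    (hs : ∀ l, s l = EE S 1 (pauli l))
    (hC : ∀ k l, C k l = EE S (pauli k) (pauli l) - n k * s l)
    (hnorm_n : ∑ k : Fin 3, (n k) ^ 2 < 1)
    (hnorm_s : ∑ l : Fin 3, (s l) ^ 2 < 1) :
    ∀ A B : M2, Dichotomic A → Dichotomic B →
      |Cor S A B| ≤ ‖C‖ /
        (Real.sqrt (1 - ∑ k : Fin 3, (n k) ^ 2) * Real.sqrt (1 - ∑ l : Fin 3, (s l) ^ 2)) := by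

  intro A B hA hB
  obtain ⟨a, ha, hAdec⟩ := dichotomic_bloch' A hA
  obtain ⟨b, hb, hBdec⟩ := dichotomic_bloch' B hB
  -- expectations in terms of Bloch vectors
  have hEA : EE S A 1 = ∑ k, a k * n k := by
    rw [hAdec]
    simp only [EE_add_left', EE_smul_left', Fin.sum_univ_three]
    simp [hn]
  have hEB : EE S 1 B = ∑ l, b l * s l := by
    rw [hBdec]
    simp only [EE_add_right', EE_smul_right', Fin.sum_univ_three]
    simp [hs]
  have hEAB : EE S A B = ∑ k, ∑ l, a k * b l * EE S (pauli k) (pauli l) := by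
    rw [hAdec, hBdec]
    simp only [EE_add_left', EE_smul_left', EE_add_right', EE_smul_right',
      Fin.sum_univ_three]
    ring
  have hCov : Cov S A B = a ⬝ᵥ (C *ᵥ b) := by
    rw [Cov, hEAB, hEA, hEB]
    simp only [dotProduct, Matrix.mulVec, hC, Fin.sum_univ_three]
    ring
  -- the covariance bound via the spectral norm
  have hCovle : |Cov S A B| ≤ ‖C‖ := by
    set a' : EuclideanSpace ℝ (Fin 3) := (EuclideanSpace.equiv (Fin 3) ℝ).symm a with ha'
    set b' : EuclideanSpace ℝ (Fin 3) := (EuclideanSpace.equiv (Fin 3) ℝ).symm b with hb'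
    set v : EuclideanSpace ℝ (Fin 3) := (EuclideanSpace.equiv (Fin 3) ℝ).symm (C *ᵥ b) with hv
    have hna : ‖a'‖ = 1 := by
      rw [EuclideanSpace.norm_eq]
      have h : ∀ k, ‖a' k‖ ^ 2 = a k ^ 2 := fun k => by
        simp [ha', EuclideanSpace.equiv, Real.norm_eq_abs, _root_.sq_abs]
      rw [Finset.sum_congr rfl fun k _ => h k, ha, Real.sqrt_one]
    have hnb : ‖b'‖ = 1 := by
      rw [EuclideanSpace.norm_eq]
      have h : ∀ k, ‖b' k‖ ^ 2 = b k ^ 2 := fun k => by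
        simp [hb', EuclideanSpace.equiv, Real.norm_eq_abs, _root_.sq_abs]
      rw [Finset.sum_congr rfl fun k _ => h k, hb, Real.sqrt_one]
    have hinner : (inner ℝ a' v : ℝ) = a ⬝ᵥ (C *ᵥ b) := by
      simp [ha', hv, EuclideanSpace.equiv, PiLp.inner_apply, RCLike.inner_apply,
        dotProduct, mul_comm]
    have h1 : |(inner ℝ a' v : ℝ)| ≤ ‖a'‖ * ‖v‖ := abs_real_inner_le_norm a' v
    have h2 : ‖v‖ ≤ ‖C‖ * ‖b'‖ := C.l2_opNorm_mulVec b'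
    rw [hCov, ← hinner]
    calc |(inner ℝ a' v : ℝ)| ≤ ‖a'‖ * ‖v‖ := h1
      _ = ‖v‖ := by rw [hna, one_mul]
      _ ≤ ‖C‖ * ‖b'‖ := h2
      _ = ‖C‖ := by rw [hnb, mul_one]
  -- variance lower bounds
  have hV1 : 1 - ∑ k, (n k) ^ 2 ≤ Var1 S A := by
    have := Finset.sum_mul_sq_le_sq_mul_sq Finset.univ a n
    rw [ha, one_mul] at this
    simp only [Var1, hEA]
    linarith
  have hV2 : 1 - ∑ l, (s l) ^ 2 ≤ Var2 S B := by
    have := Finset.sum_mul_sq_le_sq_mul_sq Finset.univ b s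
    rw [hb, one_mul] at this
    simp only [Var2, hEB]
    linarith
  have hd1 : (0:ℝ) < 1 - ∑ k, (n k) ^ 2 := by linarith
  have hd2 : (0:ℝ) < 1 - ∑ l, (s l) ^ 2 := by linarith
  have hdpos : 0 < Real.sqrt (1 - ∑ k, (n k) ^ 2) * Real.sqrt (1 - ∑ l, (s l) ^ 2) :=
    mul_pos (Real.sqrt_pos.2 hd1) (Real.sqrt_pos.2 hd2)
  have hdle : Real.sqrt (1 - ∑ k, (n k) ^ 2) * Real.sqrt (1 - ∑ l, (s l) ^ 2)
      ≤ Real.sqrt (Var1 S A * Var2 S B) := by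
    rw [← Real.sqrt_mul hd1.le]
    exact Real.sqrt_le_sqrt (mul_le_mul hV1 hV2 hd2.le (by linarith))
  rw [Cor, abs_div, _root_.abs_of_nonneg (Real.sqrt_nonneg _)]
  exact div_le_div₀ (norm_nonneg C) hCovle hdpos hdle
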